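/- Let H_k be the k×k Jacobi matrix with zero diagonal and off-diagonal entries b_j = √(j/2) for j = 1,…,k−1, whose eigenvalues z_1^k,…,z_k^k are the zeros of the k-th Hermite polynomial. Then the contracted zeros are asymptotically distributed according to the Wigner semicircle law: for every bounded continuous function φ : ℝ → ℝ, lim_{k→∞} (1/k) Σ_{j=1}^k φ(z_j^k / √(k/2)) = (1/(2π)) ∫_{−2}^{2} φ(x) √(4 − x²) dx. -/

import Mathlib

open Filter MeasureTheory

noncomputable section

/-- The `k × k` Jacobi (real symmetric tridiagonal) matrix with diagonal entries
`a 0, …, a (k-1)` and sub/super-diagonal entries `b 0, …, b (k-2)` (0-indexed). -/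
def jacobiMatrix (k : ℕ) (a b : ℕ → ℝ) : Matrix (Fin k) (Fin k) ℝ :=
  Matrix.of fun i j =>
    if (i : ℕ) = (j : ℕ) then a i
    else if (i : ℕ) + 1 = (j : ℕ) then b i
    else if (j : ℕ) + 1 = (i : ℕ) then b j
    else 0

theorem jacobiMatrix_isHermitian (k : ℕ) (a b : ℕ → ℝ) :
    (jacobiMatrix k a b).IsHermitian := by
  show _ = _
  ext i j
  simp only [Matrix.conjTranspose_apply, jacobiMatrix, Matrix.of_apply, star_trivial]
  by_cases h1 : (i : ℕ) = (j : ℕ)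
  · have h : i = j := Fin.ext h1
    subst h
    rfl
  · have h1' : ¬ (j : ℕ) = (i : ℕ) := fun h => h1 h.symm
    by_cases h2 : (i : ℕ) + 1 = (j : ℕ)
    · have h3 : ¬ (j : ℕ) + 1 = (i : ℕ) := by omega
      simp [h1, h1', h2, h3]
    · by_cases h3 : (j : ℕ) + 1 = (i : ℕ) <;> simp [h1, h1', h2, h3]

/-- `Trace[φ(J(a,b))] = ∑ⱼ φ(λⱼ)`, the sum of `φ` over the eigenvalues of the Jacobi matrix. -/
def jacobiTrace (k : ℕ) (a b : ℕ → ℝ) (φ : ℝ → ℝ) : ℝ :=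
  ∑ i, φ ((jacobiMatrix_isHermitian k a b).eigenvalues i)

/-- The class `𝒮`: small deviations `∑ᵢ |a_{i+1}^k − a_i^k| = o(k)` and entries in `[0,1]`. -/
def MemS (a : ℕ → ℕ → ℝ) : Prop :=
  ((fun k : ℕ => ∑ i ∈ Finset.range (k - 1), |a k (i + 1) - a k i|)
      =o[Filter.atTop] fun k : ℕ => (k : ℝ)) ∧
  ∀ k : ℕ, ∀ i < k, a k i ∈ Set.Icc (0 : ℝ) 1

/-- The class `𝒮′`: for every `δ ∈ (0,1)`, `∑ᵢ |a_{i+1}^k − a_i^k| = O(k^{1−δ})`, and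
`maxᵢ |a_i^k| = O(log k)`. -/
def MemS' (a : ℕ → ℕ → ℝ) : Prop :=
  (∀ δ : ℝ, δ ∈ Set.Ioo (0 : ℝ) 1 →
    ((fun k : ℕ => ∑ i ∈ Finset.range (k - 1), |a k (i + 1) - a k i|)
        =O[Filter.atTop] fun k : ℕ => (k : ℝ) ^ (1 - δ))) ∧
  ∃ C : ℝ, ∀ᶠ k : ℕ in Filter.atTop, ∀ i < k, |a k i| ≤ C * Real.log k

/-- `μ`-distributed on `I² = [0,1]²`. -/
def MuDistributedI (a b : ℕ → ℕ → ℝ) (μ : Measure (ℝ × ℝ)) : Prop :=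
  ∀ ψ : ℝ × ℝ → ℝ, ContinuousOn ψ (Set.Icc (0 : ℝ) 1 ×ˢ Set.Icc (0 : ℝ) 1) →
    Filter.Tendsto (fun k : ℕ => (1 / (k : ℝ)) * ∑ j ∈ Finset.range k, ψ (a k j, b k j))
      Filter.atTop (nhds (∫ p, ψ p ∂μ))

/-- `μ`-distributed on `ℝ²` (test functions: bounded continuous). -/
def MuDistributedR (a b : ℕ → ℕ → ℝ) (μ : Measure (ℝ × ℝ)) : Prop :=
  ∀ ψ : ℝ × ℝ → ℝ, Continuous ψ → (∃ C : ℝ, ∀ p, |ψ p| ≤ C) →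
    Filter.Tendsto (fun k : ℕ => (1 / (k : ℝ)) * ∑ j ∈ Finset.range k, ψ (a k j, b k j))
      Filter.atTop (nhds (∫ p, ψ p ∂μ))

/-- Tightness via closed bounded rectangles. -/
def TightRect (μ : Measure (ℝ × ℝ)) : Prop :=
  ∀ ε : ℝ, 0 < ε → ∃ x₁ x₂ y₁ y₂ : ℝ,
    μ ((Set.Icc x₁ x₂ ×ˢ Set.Icc y₁ y₂)ᶜ) < ENNReal.ofReal ε

/-- Almost everywhere increasing sequence of vectors. -/
def AEIncreasing (a : ℕ → ℕ → ℝ) : Prop :=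
  Filter.Tendsto
    (fun k : ℕ => (((Finset.range (k - 1)).filter fun i => a k i ≤ a k (i + 1)).card : ℝ) / k)
    Filter.atTop (nhds 1)

/-- Almost everywhere decreasing sequence of vectors. -/
def AEDecreasing (a : ℕ → ℕ → ℝ) : Prop :=
  Filter.Tendsto
    (fun k : ℕ => (((Finset.range (k - 1)).filter fun i => a k (i + 1) ≤ a k i).card : ℝ) / k)
    Filter.atTop (nhds 1)

/-- Almost everywhere monotone sequence of vectors. -/
def AEMonotone (a : ℕ → ℕ → ℝ) : Prop :=
  AEIncreasing a ∨ AEDecreasing a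

namespace SemicircleAux

open Real intervalIntegral

/-- Number of ±1-walks of length `t` with displacement `d`. -/
def Z (t : ℕ) (d : ℤ) : ℕ :=
  if 0 ≤ (t : ℤ) + d ∧ ((t : ℤ) + d) % 2 = 0 then t.choose (((t : ℤ) + d) / 2).toNat else 0

lemma Z_zero (d : ℤ) : Z 0 d = if d = 0 then 1 else 0 := by
  unfold Z
  rcases eq_or_ne d 0 with rfl | hd
  · norm_num
  · rw [if_neg hd]
    by_cases h : 0 ≤ ((0:ℕ) : ℤ) + d ∧ (((0:ℕ) : ℤ) + d) % 2 = 0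
    · rw [if_pos h]
      have h2 : (((0:ℕ) : ℤ) + d) / 2 ≥ 1 := by omega
      have : ((((0:ℕ) : ℤ) + d) / 2).toNat ≥ 1 := by omega
      exact Nat.choose_eq_zero_of_lt (by omega)
    · rw [if_neg h]

lemma Z_rec (t : ℕ) (d : ℤ) : Z (t + 1) d = Z t (d - 1) + Z t (d + 1) := by
  unfold Z
  by_cases h : 0 ≤ (t : ℤ) + 1 + d ∧ ((t : ℤ) + 1 + d) % 2 = 0
  · rw [if_pos (by push_cast; omega)]
    by_cases h2 : (t : ℤ) + 1 + d = 0
    · -- s = 0 case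
      rw [if_neg (by push_cast; omega), if_pos (by push_cast; omega)]
      have e1 : (((t : ℤ) + 1 + d) / 2).toNat = 0 := by omega
      have e2 : (((t : ℤ) + (d + 1)) / 2).toNat = 0 := by omega
      simp [e1, e2]
    · have hge : (t : ℤ) + 1 + d ≥ 2 := by omega
      rw [if_pos (by push_cast; omega), if_pos (by push_cast; omega)]
      set s : ℕ := (((t : ℤ) + 1 + d) / 2).toNat with hs
      have hs1 : 1 ≤ s := by omega
      have e1 : (((t : ℤ) + (d - 1)) / 2).toNat = s - 1 := by omega
      have e2 : (((t : ℤ) + (d + 1)) / 2).toNat = s := by omega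
      rw [e1, e2]
      obtain ⟨s', hs'⟩ : ∃ s', s = s' + 1 := ⟨s - 1, by omega⟩
      have e0 : (((t + 1 : ℕ) : ℤ) + d) / 2 = ((t : ℤ) + 1 + d) / 2 := by push_cast; ring_nf
      rw [e0, ← hs, hs', Nat.choose_succ_succ']
      simp [Nat.add_comm]
  · rw [if_neg (by push_cast at h ⊢; omega)]
    rw [if_neg (by push_cast at h ⊢; omega), if_neg (by push_cast at h ⊢; omega)]

lemma Z_odd (t : ℕ) (d : ℤ) (h : ((t : ℤ) + d) % 2 = 1) : Z t d = 0 := by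
  unfold Z; rw [if_neg (by omega)]

lemma Z_two_mul (n : ℕ) : Z (2 * n) 0 = Nat.centralBinom n := by
  unfold Z
  rw [if_pos (by push_cast; omega)]
  have : (((2 * n : ℕ) : ℤ) + 0) / 2 = n := by push_cast; omega
  rw [this]
  simp [Nat.centralBinom]

/-- Path-sum recursion modelling the entries of powers of the scaled Jacobi matrix. -/
def PS (k : ℕ) : ℕ → ℤ → ℤ → ℝ
  | 0, i, j => if i = j then 1 else 0
  | m + 1, i, j =>
      (if 0 ≤ i ∧ i + 1 < (k : ℤ) then Real.sqrt (((i : ℝ) + 1) / k) else 0) * PS k m (i + 1) j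
    + (if 1 ≤ i ∧ i < (k : ℤ) then Real.sqrt ((i : ℝ) / k) else 0) * PS k m (i - 1) j

lemma PS_nonneg (k : ℕ) : ∀ m (i j : ℤ), 0 ≤ PS k m i j := by
  intro m
  induction m with
  | zero => intro i j; simp only [PS]; split <;> norm_num
  | succ m ih =>
    intro i j
    simp only [PS]
    have h1 : (0:ℝ) ≤ (if 0 ≤ i ∧ i + 1 < (k : ℤ) then Real.sqrt (((i : ℝ) + 1) / k) else 0) := by
      split
      · exact Real.sqrt_nonneg _
      · exact le_refl 0
    have h2 : (0:ℝ) ≤ (if 1 ≤ i ∧ i < (k : ℤ) then Real.sqrt ((i : ℝ) / k) else 0) := by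
      split
      · exact Real.sqrt_nonneg _
      · exact le_refl 0
    exact add_nonneg (mul_nonneg h1 (ih _ _)) (mul_nonneg h2 (ih _ _))


lemma sdiv_mono (k : ℕ) {a b : ℝ} (h : a ≤ b) : Real.sqrt (a / k) ≤ Real.sqrt (b / k) := by
  apply Real.sqrt_le_sqrt
  rcases Nat.eq_zero_or_pos k with rfl | hk
  · simp
  · exact div_le_div_of_nonneg_right h (by positivity)

lemma Z_cast_rec (m : ℕ) (i j : ℤ) :
    (Z (m + 1) (j - i) : ℝ) = (Z m (j - (i + 1)) : ℝ) + (Z m (j - (i - 1)) : ℝ) := by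
  have := Z_rec m (j - i)
  have e1 : j - i - 1 = j - (i + 1) := by ring
  have e2 : j - i + 1 = j - (i - 1) := by ring
  rw [e1, e2] at this
  exact_mod_cast congrArg (Nat.cast : ℕ → ℝ) this

lemma step_mul_le (m : ℕ) {w u v P C : ℝ} (hw : 0 ≤ w) (hwu : w ≤ u) (hv : 0 ≤ v)
    (hvu : v ≤ u) (hP : 0 ≤ P) (hC : 0 ≤ C) (h : P ≤ C * v ^ m) :
    w * P ≤ C * u ^ (m + 1) := by
  have hu : 0 ≤ u := hw.trans hwu
  calc w * P ≤ u * (C * v ^ m) := mul_le_mul hwu h hP hu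
    _ ≤ u * (C * u ^ m) :=
        mul_le_mul_of_nonneg_left (mul_le_mul_of_nonneg_left (pow_le_pow_left₀ hv hvu m) hC) hu
    _ = C * u ^ (m + 1) := by ring

lemma PS_le (k : ℕ) : ∀ m (i j : ℤ),
    PS k m i j ≤ (Z m (j - i) : ℝ) * (Real.sqrt (((i : ℝ) + m + 1) / k)) ^ m := by
  intro m
  induction m with
  | zero =>
    intro i j
    simp only [PS, pow_zero, mul_one, Z_zero]
    rcases eq_or_ne i j with rfl | hij
    · simp
    · rw [if_neg hij, if_neg (by omega)]
      norm_num
  | succ m ih =>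
    intro i j
    have goal_eq : ((i : ℝ) + ((m + 1 : ℕ) : ℝ) + 1) = ((i : ℝ) + (m : ℝ) + 2) := by
      push_cast; ring
    simp only [PS, goal_eq, Z_cast_rec, add_mul]
    apply add_le_add
    · split
      · rename_i hc
        have h := ih (i + 1) j
        have e : (((i + 1 : ℤ) : ℝ) + (m : ℝ) + 1) = ((i : ℝ) + (m : ℝ) + 2) := by
          push_cast; ring
        rw [e] at h
        exact step_mul_le m (Real.sqrt_nonneg _)
          (sdiv_mono k (by push_cast; nlinarith [Int.toNat_of_nonneg hc.1]))
          (Real.sqrt_nonneg _) le_rfl (PS_nonneg k m _ _) (Nat.cast_nonneg _) h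
      · rw [zero_mul]; positivity
    · split
      · rename_i hc
        have h := ih (i - 1) j
        have e : (((i - 1 : ℤ) : ℝ) + (m : ℝ) + 1) = ((i : ℝ) + (m : ℝ)) := by
          push_cast; ring
        rw [e] at h
        refine step_mul_le m (Real.sqrt_nonneg _)
          (sdiv_mono k (by linarith [Nat.cast_nonneg (α := ℝ) m]))
          (Real.sqrt_nonneg _) (sdiv_mono k (by norm_num)) (PS_nonneg k m _ _)
          (Nat.cast_nonneg _) h
      · rw [zero_mul]; positivity

lemma PS_ge (k : ℕ) : ∀ (m : ℕ) (i j : ℤ), (m : ℤ) ≤ i → i + m ≤ (k : ℤ) - 1 →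
    (Z m (j - i) : ℝ) * (Real.sqrt (((i : ℝ) - m) / k)) ^ m ≤ PS k m i j := by
  intro m
  induction m with
  | zero =>
    intro i j _ _
    simp only [PS, pow_zero, mul_one, Z_zero]
    rcases eq_or_ne i j with rfl | hij
    · simp
    · rw [if_neg (by omega), if_neg hij]
      norm_num
  | succ m ih =>
    intro i j hlo hhi
    have hk : ((m : ℤ) + 1) + (i + m) ≤ (k : ℤ) - 1 + i := by push_cast at hhi ⊢; omega
    have hup : 0 ≤ i ∧ i + 1 < (k : ℤ) := by push_cast at hlo hhi ⊢; omega
    have hdn : 1 ≤ i ∧ i < (k : ℤ) := by push_cast at hlo hhi ⊢; omega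
    have goal_eq : ((i : ℝ) - ((m + 1 : ℕ) : ℝ)) = ((i : ℝ) - (m : ℝ) - 1) := by
      push_cast; ring
    simp only [PS, goal_eq, Z_cast_rec, add_mul, if_pos hup, if_pos hdn]
    have hL0 : (0:ℝ) ≤ Real.sqrt (((i : ℝ) - (m : ℝ) - 1) / k) := Real.sqrt_nonneg _
    apply add_le_add
    · -- up term
      have h := ih (i + 1) j (by push_cast at hlo ⊢; omega) (by push_cast at hhi ⊢; omega)
      have e : (((i + 1 : ℤ) : ℝ) - (m : ℝ)) = ((i : ℝ) + 1 - m) := by push_cast; ring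
      rw [e] at h
      calc (Z m (j - (i + 1)) : ℝ) * Real.sqrt (((i:ℝ) - m - 1) / k) ^ (m + 1)
          = Real.sqrt (((i:ℝ) - m - 1) / k) *
            ((Z m (j - (i + 1)) : ℝ) * Real.sqrt (((i:ℝ) - m - 1) / k) ^ m) := by ring
        _ ≤ Real.sqrt (((i : ℝ) + 1) / k) * PS k m (i + 1) j := by
            apply mul_le_mul (sdiv_mono k (by linarith [Nat.cast_nonneg (α := ℝ) m]))
            · refine le_trans ?_ h
              apply mul_le_mul_of_nonneg_left ?_ (Nat.cast_nonneg _)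
              exact pow_le_pow_left₀ hL0 (sdiv_mono k (by linarith)) m
            · positivity
            · exact Real.sqrt_nonneg _
    · -- down term
      have h := ih (i - 1) j (by push_cast at hlo ⊢; omega) (by push_cast at hhi ⊢; omega)
      have e : (((i - 1 : ℤ) : ℝ) - (m : ℝ)) = ((i : ℝ) - m - 1) := by push_cast; ring
      rw [e] at h
      calc (Z m (j - (i - 1)) : ℝ) * Real.sqrt (((i:ℝ) - m - 1) / k) ^ (m + 1)
          = Real.sqrt (((i:ℝ) - m - 1) / k) *
            ((Z m (j - (i - 1)) : ℝ) * Real.sqrt (((i:ℝ) - m - 1) / k) ^ m) := by ring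
        _ ≤ Real.sqrt ((i : ℝ) / k) * PS k m (i - 1) j := by
            apply mul_le_mul (sdiv_mono k ?_) h (by positivity) (Real.sqrt_nonneg _)
            have : (0:ℝ) ≤ (m : ℝ) := Nat.cast_nonneg _
            linarith

lemma sum_fin_ite (k c : ℕ) (g : Fin k → ℝ) :
    (∑ l : Fin k, if (l : ℕ) = c then g l else 0) = if h : c < k then g ⟨c, h⟩ else 0 := by
  split
  · rename_i h
    rw [Finset.sum_eq_single (⟨c, h⟩ : Fin k)]
    · simp
    · intro l _ hl
      rw [if_neg (by simpa [Fin.ext_iff] using hl)]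
    · intro h'; exact absurd (Finset.mem_univ _) h'
  · rename_i h
    apply Finset.sum_eq_zero
    intro l _
    rw [if_neg (by intro hc; exact h (hc ▸ l.isLt))]

/-- The scaled Jacobi matrix. -/
def Amat (k : ℕ) : Matrix (Fin k) (Fin k) ℝ :=
  jacobiMatrix k (fun _ => 0) (fun i => Real.sqrt (((i : ℝ) + 1) / k))

lemma Amat_apply (k : ℕ) (i l : Fin k) :
    Amat k i l = (if (i : ℕ) + 1 = (l : ℕ) then Real.sqrt (((i : ℝ) + 1) / k) else 0)
      + (if (l : ℕ) + 1 = (i : ℕ) then Real.sqrt (((l : ℝ) + 1) / k) else 0) := by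
  unfold Amat jacobiMatrix
  simp only [Matrix.of_apply]
  by_cases h1 : (i : ℕ) = (l : ℕ)
  · have h2 : ¬((i : ℕ) + 1 = (l : ℕ)) := by omega
    have h3 : ¬((l : ℕ) + 1 = (i : ℕ)) := by omega
    simp [h1, h2, h3]
  · by_cases h2 : (i : ℕ) + 1 = (l : ℕ)
    · have h3 : ¬((l : ℕ) + 1 = (i : ℕ)) := by omega
      simp [h1, h2, h3]
    · by_cases h3 : (l : ℕ) + 1 = (i : ℕ) <;> simp [h1, h2, h3]

lemma Amat_pow_eq_PS (k : ℕ) (m : ℕ) (i j : Fin k) :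
    ((Amat k) ^ m) i j = PS k m ((i : ℕ) : ℤ) ((j : ℕ) : ℤ) := by
  induction m generalizing i with
  | zero =>
    simp only [pow_zero, Matrix.one_apply, PS]
    by_cases h : i = j
    · rw [if_pos h, if_pos (by exact_mod_cast congrArg (fun x : Fin k => ((x : ℕ) : ℤ)) h)]
    · rw [if_neg h, if_neg (by intro hc; exact h (Fin.ext (by exact_mod_cast hc)))]
  | succ m ih =>
    rw [pow_succ']
    rw [Matrix.mul_apply]
    have expand : ∀ l : Fin k, Amat k i l * ((Amat k) ^ m) l j
        = (if (l : ℕ) = (i : ℕ) + 1 then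
            Real.sqrt (((i : ℝ) + 1) / k) * ((Amat k) ^ m) l j else 0)
        + (if (l : ℕ) = (i : ℕ) - 1 ∧ 1 ≤ (i : ℕ) then
            Real.sqrt (((i : ℝ)) / k) * ((Amat k) ^ m) l j else 0) := by
      intro l
      rw [Amat_apply, add_mul]
      congr 1
      · by_cases h : (i : ℕ) + 1 = (l : ℕ)
        · rw [if_pos h, if_pos h.symm]
        · rw [if_neg h, if_neg (fun hc => h hc.symm), zero_mul]
      · by_cases h : (l : ℕ) + 1 = (i : ℕ)
        · rw [if_pos h, if_pos ⟨by omega, by omega⟩]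
          have : ((l : ℝ) + 1) = (i : ℝ) := by exact_mod_cast h
          rw [this]
        · rw [if_neg h, if_neg (by omega), zero_mul]
    rw [Finset.sum_congr rfl (fun l _ => expand l), Finset.sum_add_distrib]
    have e1 : (∑ l : Fin k, if (l : ℕ) = (i : ℕ) + 1 then
          Real.sqrt (((i : ℝ) + 1) / k) * ((Amat k) ^ m) l j else 0)
        = (if 0 ≤ ((i : ℕ) : ℤ) ∧ ((i : ℕ) : ℤ) + 1 < (k : ℤ) then
            Real.sqrt (((((i : ℕ) : ℤ) : ℝ) + 1) / k) else 0)
          * PS k m (((i : ℕ) : ℤ) + 1) ((j : ℕ) : ℤ) := by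
      rw [sum_fin_ite]
      by_cases h : (i : ℕ) + 1 < k
      · rw [dif_pos h, if_pos (by constructor <;> [positivity; exact_mod_cast h])]
        rw [ih ⟨(i : ℕ) + 1, h⟩]
        norm_num
      · rw [dif_neg h, if_neg (by push_cast; omega), zero_mul]
    have e2 : (∑ l : Fin k, if (l : ℕ) = (i : ℕ) - 1 ∧ 1 ≤ (i : ℕ) then
          Real.sqrt ((i : ℝ) / k) * ((Amat k) ^ m) l j else 0)
        = (if 1 ≤ ((i : ℕ) : ℤ) ∧ ((i : ℕ) : ℤ) < (k : ℤ) then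
            Real.sqrt (((((i : ℕ) : ℤ) : ℝ)) / k) else 0)
          * PS k m (((i : ℕ) : ℤ) - 1) ((j : ℕ) : ℤ) := by
      by_cases hge : 1 ≤ (i : ℕ)
      · simp only [hge, and_true]
        rw [sum_fin_ite]
        have hlt : (i : ℕ) - 1 < k := by omega
        rw [dif_pos hlt, if_pos (by constructor <;> [exact_mod_cast hge; exact_mod_cast i.isLt])]
        rw [ih ⟨(i : ℕ) - 1, hlt⟩]
        have hcast : ((((⟨(i : ℕ) - 1, hlt⟩ : Fin k) : ℕ)) : ℤ) = ((i : ℕ) : ℤ) - 1 := by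
          simp only [Fin.val_mk]; omega
        rw [hcast]
        norm_num
      · rw [if_neg (by push_cast; omega), zero_mul]
        apply Finset.sum_eq_zero
        intro l _
        rw [if_neg (by tauto)]
    rw [e1, e2]
    simp only [PS]

/-- Trace of a power of a real symmetric matrix is the sum of powers of eigenvalues. -/
lemma trace_pow_eq {M : Matrix (Fin k) (Fin k) ℝ} (hM : M.IsHermitian) (m : ℕ) :
    (M ^ m).trace = ∑ j, hM.eigenvalues j ^ m := by
  have hU1 : (hM.eigenvectorUnitary : Matrix (Fin k) (Fin k) ℝ) *
      (star hM.eigenvectorUnitary : Matrix (Fin k) (Fin k) ℝ) = 1 := by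
    exact_mod_cast hM.eigenvectorUnitary.2.2
  have hU2 : (star hM.eigenvectorUnitary : Matrix (Fin k) (Fin k) ℝ) *
      (hM.eigenvectorUnitary : Matrix (Fin k) (Fin k) ℝ) = 1 := by
    exact_mod_cast hM.eigenvectorUnitary.2.1
  set U : Matrix (Fin k) (Fin k) ℝ := (hM.eigenvectorUnitary : Matrix (Fin k) (Fin k) ℝ)
  set D : Matrix (Fin k) (Fin k) ℝ :=
    Matrix.diagonal (RCLike.ofReal ∘ hM.eigenvalues)
  have hpow : M ^ m = U * D ^ m * star U := by
    induction m with
    | zero => simpa using hU1.symm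
    | succ m ih =>
      rw [pow_succ, ih, hM.spectral_theorem]
      calc U * D ^ m * star U * (U * D * star U)
          = U * D ^ m * (star U * U) * D * star U := by
            simp only [Matrix.mul_assoc]
        _ = U * D ^ (m + 1) * star U := by rw [hU2]; simp only [Matrix.mul_one, pow_succ,
            Matrix.mul_assoc]
  rw [hpow, Matrix.trace_mul_cycle, hU2, Matrix.one_mul,
    Matrix.diagonal_pow, Matrix.trace_diagonal]
  simp


/-- The Jacobi matrix of the Hermite recurrence. -/
def Jmat (k : ℕ) : Matrix (Fin k) (Fin k) ℝ :=
  jacobiMatrix k (fun _ => 0) (fun i => Real.sqrt (((i : ℝ) + 1) / 2))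

/-- The eigenvalues of the Hermite Jacobi matrix. -/
def ev (k : ℕ) : Fin k → ℝ :=
  (jacobiMatrix_isHermitian k (fun _ => 0) (fun i => Real.sqrt (((i : ℝ) + 1) / 2))).eigenvalues

lemma sqrt_div_sqrt (k : ℕ) (hk : 1 ≤ k) {x : ℝ} (hx : 0 ≤ x) :
    (Real.sqrt ((k : ℝ) / 2))⁻¹ * Real.sqrt (x / 2) = Real.sqrt (x / k) := by
  have hk0 : (0:ℝ) < k := by exact_mod_cast hk
  rw [inv_mul_eq_div, ← Real.sqrt_div (by linarith)]
  congr 1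
  field_simp

lemma smul_Jmat (k : ℕ) (hk : 1 ≤ k) :
    (Real.sqrt ((k : ℝ) / 2))⁻¹ • Jmat k = Amat k := by
  ext i j
  simp only [Matrix.smul_apply, Jmat, Amat, jacobiMatrix, Matrix.of_apply, smul_eq_mul]
  by_cases h1 : (i : ℕ) = (j : ℕ)
  · rw [if_pos h1, if_pos h1, mul_zero]
  · rw [if_neg h1, if_neg h1]
    by_cases h2 : (i : ℕ) + 1 = (j : ℕ)
    · rw [if_pos h2, if_pos h2, sqrt_div_sqrt k hk (by positivity)]
    · rw [if_neg h2, if_neg h2]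
      by_cases h3 : (j : ℕ) + 1 = (i : ℕ)
      · rw [if_pos h3, if_pos h3, sqrt_div_sqrt k hk (by positivity)]
      · rw [if_neg h3, if_neg h3, mul_zero]

/-- Sum of powers of scaled eigenvalues equals the diagonal path sums. -/
lemma sum_pow_eq (k : ℕ) (hk : 1 ≤ k) (m : ℕ) :
    ∑ j : Fin k, (ev k j / Real.sqrt ((k : ℝ) / 2)) ^ m
      = ∑ i : Fin k, PS k m ((i : ℕ) : ℤ) ((i : ℕ) : ℤ) := by
  have hherm := jacobiMatrix_isHermitian k (fun _ => 0)
    (fun i => Real.sqrt (((i : ℝ) + 1) / 2))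
  have h1 : ∑ j : Fin k, (ev k j / Real.sqrt ((k : ℝ) / 2)) ^ m
      = ((Real.sqrt ((k : ℝ) / 2))⁻¹) ^ m * (Jmat k ^ m).trace := by
    unfold ev Jmat
    rw [trace_pow_eq hherm m, Finset.mul_sum]
    apply Finset.sum_congr rfl
    intro j _
    rw [div_eq_mul_inv, mul_pow, mul_comm, inv_pow]
  have h2 : ((Real.sqrt ((k : ℝ) / 2))⁻¹) ^ m * (Jmat k ^ m).trace
      = ((Amat k) ^ m).trace := by
    rw [← smul_Jmat k hk, smul_pow, Matrix.trace_smul, smul_eq_mul]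
  rw [h1, h2, Matrix.trace]
  apply Finset.sum_congr rfl
  intro i _
  exact Amat_pow_eq_PS k m i i

lemma sum_ite_shift (k c : ℕ) (C : ℝ) (hC : 0 ≤ C) :
    (∑ j : Fin k, if (j : ℕ) + 1 = c then C else 0) ≤ C := by
  rcases c with _ | c'
  · rw [Finset.sum_eq_zero (fun j _ => if_neg (by omega))]; exact hC
  · have he : ∀ j : Fin k, (if (j : ℕ) + 1 = c' + 1 then C else 0)
        = (if (j : ℕ) = c' then C else 0) := by
      intro j; by_cases h : (j : ℕ) = c'
      · rw [if_pos (by omega), if_pos h]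
      · rw [if_neg (by omega), if_neg h]
    rw [Finset.sum_congr rfl (fun j _ => he j), sum_fin_ite]
    split
    · exact le_refl C
    · exact hC

lemma ev_bound (k : ℕ) (j : Fin k) :
    |ev k j| ≤ 2 * Real.sqrt (((k : ℝ) - 1) / 2) := by
  set C := Real.sqrt (((k : ℝ) - 1) / 2) with hC
  have hC0 : 0 ≤ C := Real.sqrt_nonneg _
  have hherm := jacobiMatrix_isHermitian k (fun _ => 0)
    (fun i => Real.sqrt (((i : ℝ) + 1) / 2))
  have hvec := hherm.mulVec_eigenvectorBasis j
  have hv0 : (⇑(hherm.eigenvectorBasis j) : Fin k → ℝ) ≠ 0 := by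
    intro h0
    apply hherm.eigenvectorBasis.orthonormal.ne_zero j
    ext l
    exact congrFun h0 l
  have heig : Module.End.HasEigenvalue
      (Matrix.toLin' (jacobiMatrix k (fun _ => 0)
        (fun i => Real.sqrt (((i : ℝ) + 1) / 2)))) (ev k j) := by
    apply Module.End.hasEigenvalue_of_hasEigenvector
      (x := (⇑(hherm.eigenvectorBasis j) : Fin k → ℝ))
    refine ⟨Module.End.mem_eigenspace_iff.2 ?_, hv0⟩
    rw [Matrix.toLin'_apply]
    exact hvec
  obtain ⟨i, hi⟩ := eigenvalue_mem_ball heig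
  have hdiag : jacobiMatrix k (fun _ => 0)
      (fun i => Real.sqrt (((i : ℝ) + 1) / 2)) i i = 0 := by
    simp [jacobiMatrix]
  rw [Metric.mem_closedBall, hdiag, Real.dist_eq, sub_zero] at hi
  refine hi.trans ?_
  have hterm : ∀ l ∈ Finset.univ.erase i,
      ‖jacobiMatrix k (fun _ => 0) (fun i => Real.sqrt (((i : ℝ) + 1) / 2)) i l‖
      ≤ (if (l : ℕ) = (i : ℕ) + 1 then C else 0)
        + (if (l : ℕ) + 1 = (i : ℕ) then C else 0) := by
    intro l hl
    have hne : (l : ℕ) ≠ (i : ℕ) := fun hc => (Finset.mem_erase.1 hl).1 (Fin.ext hc)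
    have hlk : (l : ℕ) < k := l.isLt
    have hik : (i : ℕ) < k := i.isLt
    simp only [jacobiMatrix, Matrix.of_apply]
    rw [if_neg (show ¬((i : ℕ) = (l : ℕ)) by omega)]
    by_cases h2 : (i : ℕ) + 1 = (l : ℕ)
    · rw [if_pos h2, if_pos (show (l : ℕ) = (i : ℕ) + 1 by omega),
        if_neg (show ¬((l : ℕ) + 1 = (i : ℕ)) by omega), add_zero, Real.norm_eq_abs,
        abs_of_nonneg (Real.sqrt_nonneg _)]
      apply Real.sqrt_le_sqrt
      have hcast : ((i : ℕ) : ℝ) + 2 ≤ (k : ℝ) := by exact_mod_cast (by omega : (i : ℕ) + 2 ≤ k)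
      linarith
    · rw [if_neg h2, if_neg (show ¬((l : ℕ) = (i : ℕ) + 1) by omega)]
      by_cases h3 : (l : ℕ) + 1 = (i : ℕ)
      · rw [if_pos h3, if_pos h3, zero_add, Real.norm_eq_abs,
          abs_of_nonneg (Real.sqrt_nonneg _)]
        apply Real.sqrt_le_sqrt
        have hcast : ((l : ℕ) : ℝ) + 2 ≤ (k : ℝ) := by exact_mod_cast (by omega : (l : ℕ) + 2 ≤ k)
        linarith
      · rw [if_neg h3, if_neg h3]
        simp
  calc ∑ l ∈ Finset.univ.erase i,
        ‖jacobiMatrix k (fun _ => 0) (fun i => Real.sqrt (((i : ℝ) + 1) / 2)) i l‖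
      ≤ ∑ l ∈ Finset.univ.erase i,
          ((if (l : ℕ) = (i : ℕ) + 1 then C else 0) + (if (l : ℕ) + 1 = (i : ℕ) then C else 0)) :=
        Finset.sum_le_sum hterm
    _ ≤ ∑ l : Fin k,
          ((if (l : ℕ) = (i : ℕ) + 1 then C else 0) + (if (l : ℕ) + 1 = (i : ℕ) then C else 0)) := by
        apply Finset.sum_le_sum_of_subset_of_nonneg (Finset.subset_univ _)
        intro l _ _
        have : (0:ℝ) ≤ (if (l : ℕ) = (i : ℕ) + 1 then C else 0) := by split <;> simp [hC0]
        have : (0:ℝ) ≤ (if (l : ℕ) + 1 = (i : ℕ) then C else 0) := by split <;> simp [hC0]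
        linarith
    _ ≤ C + C := by
        rw [Finset.sum_add_distrib]
        apply add_le_add
        · rw [sum_fin_ite]
          split
          · exact le_refl C
          · exact hC0
        · exact sum_ite_shift k _ C hC0
    _ = 2 * C := by ring


def SumPow (n k : ℕ) : ℝ := ∑ j ∈ Finset.range k, ((j : ℝ)) ^ n

lemma key_ineq (n : ℕ) {a : ℝ} (ha : 0 ≤ a) :
    ((n : ℝ) + 1) * a ^ n ≤ (a + 1) ^ (n + 1) - a ^ (n + 1) ∧
    (a + 1) ^ (n + 1) - a ^ (n + 1) ≤ ((n : ℝ) + 1) * (a + 1) ^ n := by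
  have hgeom : (∑ i ∈ Finset.range (n + 1), (a + 1) ^ i * a ^ (n - i)) * ((a + 1) - a)
      = (a + 1) ^ (n + 1) - a ^ (n + 1) := geom_sum₂_mul (a + 1) a (n + 1)
  have hsub : (a + 1) - a = 1 := by ring
  rw [hsub, mul_one] at hgeom
  constructor
  · rw [← hgeom]
    have : ((n : ℝ) + 1) * a ^ n = ∑ _i ∈ Finset.range (n + 1), a ^ n := by
      rw [Finset.sum_const, Finset.card_range]; push_cast; ring
    rw [this]
    apply Finset.sum_le_sum
    intro i hi
    have hin : i ≤ n := by simpa [Nat.lt_succ_iff] using hi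
    calc a ^ n = a ^ i * a ^ (n - i) := by rw [← pow_add]; congr 1; omega
      _ ≤ (a + 1) ^ i * a ^ (n - i) := by
          apply mul_le_mul_of_nonneg_right (pow_le_pow_left₀ ha (by linarith) i) (by positivity)
  · rw [← hgeom]
    have : ((n : ℝ) + 1) * (a + 1) ^ n = ∑ _i ∈ Finset.range (n + 1), (a + 1) ^ n := by
      rw [Finset.sum_const, Finset.card_range]; push_cast; ring
    rw [this]
    apply Finset.sum_le_sum
    intro i hi
    have hin : i ≤ n := by simpa [Nat.lt_succ_iff] using hi
    calc (a + 1) ^ i * a ^ (n - i) ≤ (a + 1) ^ i * (a + 1) ^ (n - i) := by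
          apply mul_le_mul_of_nonneg_left (pow_le_pow_left₀ (by positivity) (by linarith) _)
            (by positivity)
      _ = (a + 1) ^ n := by rw [← pow_add]; congr 1; omega

lemma sumPow_le (n k : ℕ) : ((n : ℝ) + 1) * SumPow n k ≤ (k : ℝ) ^ (n + 1) := by
  have htel : ∑ j ∈ Finset.range k, (((j : ℝ) + 1) ^ (n + 1) - (j : ℝ) ^ (n + 1))
      = (k : ℝ) ^ (n + 1) := by
    have := Finset.sum_range_sub (f := fun j : ℕ => ((j : ℝ)) ^ (n + 1)) k
    simpa using this
  rw [← htel, SumPow, Finset.mul_sum]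
  apply Finset.sum_le_sum
  intro j _
  exact (key_ineq n (by positivity : (0:ℝ) ≤ (j : ℝ))).1

lemma le_sumPow (n k : ℕ) :
    (k : ℝ) ^ (n + 1) ≤ ((n : ℝ) + 1) * (SumPow n k + (k : ℝ) ^ n) := by
  have htel : ∑ j ∈ Finset.range k, (((j : ℝ) + 1) ^ (n + 1) - (j : ℝ) ^ (n + 1))
      = (k : ℝ) ^ (n + 1) := by
    have := Finset.sum_range_sub (f := fun j : ℕ => ((j : ℝ)) ^ (n + 1)) k
    simpa using this
  have h1 : (k : ℝ) ^ (n + 1) ≤ ((n : ℝ) + 1) * ∑ j ∈ Finset.range k, ((j : ℝ) + 1) ^ n := by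
    rw [← htel, Finset.mul_sum]
    apply Finset.sum_le_sum
    intro j _
    exact (key_ineq n (by positivity : (0:ℝ) ≤ (j : ℝ))).2
  refine h1.trans (mul_le_mul_of_nonneg_left ?_ (by positivity))
  have h2 : ∑ j ∈ Finset.range k, ((j : ℝ) + 1) ^ n ≤ SumPow n (k + 1) := by
    have := Finset.sum_range_succ' (fun j : ℕ => ((j : ℝ)) ^ n) k
    rw [SumPow, this]
    have h0 : (0:ℝ) ≤ ((0:ℕ) : ℝ) ^ n := by positivity
    have : ∀ j ∈ Finset.range k, ((j : ℝ) + 1) ^ n = (((j + 1 : ℕ) : ℝ)) ^ n := by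
      intro j _; push_cast; ring
    rw [Finset.sum_congr rfl this]
    linarith
  have h3 : SumPow n (k + 1) = SumPow n k + (k : ℝ) ^ n := by
    rw [SumPow, SumPow, Finset.sum_range_succ]
  linarith [h2, h3.le]

lemma tendsto_sumPow (n : ℕ) :
    Tendsto (fun k : ℕ => SumPow n k / (k : ℝ) ^ (n + 1)) atTop
      (nhds (1 / ((n : ℝ) + 1))) := by
  have hn1 : (0:ℝ) < (n : ℝ) + 1 := by positivity
  apply tendsto_of_tendsto_of_tendsto_of_le_of_le'
    (g := fun k : ℕ => 1 / ((n : ℝ) + 1) - 1 / (k : ℝ))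
    (h := fun _ : ℕ => 1 / ((n : ℝ) + 1))
  · simpa using (tendsto_const_nhds (x := 1 / ((n : ℝ) + 1)) (f := atTop)).sub
      tendsto_one_div_atTop_nhds_zero_nat
  · exact tendsto_const_nhds
  · filter_upwards [eventually_ge_atTop 1] with k hk
    have hk0 : (0:ℝ) < (k : ℝ) := by exact_mod_cast hk
    have hkp : (0:ℝ) < (k : ℝ) ^ (n + 1) := by positivity
    have h := le_sumPow n k
    have h2 : (k:ℝ) ^ (n+1) / ((n:ℝ)+1) ≤ SumPow n k + (k:ℝ) ^ n :=
      (div_le_iff₀ hn1).2 (by linarith)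
    have e : 1/((n:ℝ)+1) - 1/(k:ℝ)
        = ((k:ℝ)^(n+1)/((n:ℝ)+1) - (k:ℝ)^n)/(k:ℝ)^(n+1) := by
      field_simp
      ring
    rw [e]
    apply div_le_div_of_nonneg_right (by linarith) hkp.le
  · filter_upwards [eventually_ge_atTop 1] with k hk
    have hk0 : (0:ℝ) < (k : ℝ) := by exact_mod_cast hk
    have hkp : (0:ℝ) < (k : ℝ) ^ (n + 1) := by positivity
    rw [div_le_div_iff₀ hkp hn1]
    have h := sumPow_le n k
    linarith


lemma sumPow_nonneg (n k : ℕ) : 0 ≤ SumPow n k := by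
  apply Finset.sum_nonneg; intro j _; positivity

lemma tendsto_kc_div (c : ℕ) :
    Tendsto (fun k : ℕ => ((k : ℝ) + c) / (k : ℝ)) atTop (nhds 1) := by
  have h : Tendsto (fun k : ℕ => 1 + (c : ℝ) * (1 / (k : ℝ))) atTop (nhds (1 + (c : ℝ) * 0)) :=
    tendsto_const_nhds.add (tendsto_one_div_atTop_nhds_zero_nat.const_mul _)
  rw [mul_zero, add_zero] at h
  apply h.congr'
  filter_upwards [eventually_ge_atTop 1] with k hk
  have hk0 : (0:ℝ) < (k : ℝ) := by exact_mod_cast hk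
  field_simp

lemma tendsto_kc_div_sub (c : ℕ) :
    Tendsto (fun k : ℕ => (((k - c : ℕ) : ℝ)) / (k : ℝ)) atTop (nhds 1) := by
  have h : Tendsto (fun k : ℕ => 1 - (c : ℝ) * (1 / (k : ℝ))) atTop (nhds (1 - (c : ℝ) * 0)) :=
    tendsto_const_nhds.sub (tendsto_one_div_atTop_nhds_zero_nat.const_mul _)
  rw [mul_zero, sub_zero] at h
  apply h.congr'
  filter_upwards [eventually_ge_atTop (c + 1)] with k hk
  have hk0 : (0:ℝ) < (k : ℝ) := by exact_mod_cast (by omega : 1 ≤ k)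
  have hcast : ((k - c : ℕ) : ℝ) = (k : ℝ) - c := by
    have : c ≤ k := by omega
    push_cast [this]
    ring
  rw [hcast]
  field_simp

lemma tendsto_ratio_add (n c : ℕ) :
    Tendsto (fun k : ℕ => SumPow n (k + c) / (k : ℝ) ^ (n + 1)) atTop
      (nhds (1 / ((n : ℝ) + 1))) := by
  have h1 : Tendsto (fun k : ℕ => SumPow n (k + c) / ((k + c : ℕ) : ℝ) ^ (n + 1)) atTop
      (nhds (1 / ((n : ℝ) + 1))) := (tendsto_sumPow n).comp (tendsto_add_atTop_nat c)
  have h2 : Tendsto (fun k : ℕ => (((k + c : ℕ) : ℝ) / (k : ℝ)) ^ (n + 1)) atTop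
      (nhds 1) := by
    have := (tendsto_kc_div c).pow (n + 1)
    rw [one_pow] at this
    apply this.congr
    intro k
    push_cast
    ring_nf
  have := h1.mul h2
  rw [mul_one] at this
  apply this.congr'
  filter_upwards [eventually_ge_atTop 1] with k hk
  have hk0 : (0:ℝ) < (k : ℝ) := by exact_mod_cast hk
  have hkc0 : (0:ℝ) < ((k + c : ℕ) : ℝ) := by positivity
  rw [div_pow]; field_simp

lemma tendsto_ratio_sub (n c : ℕ) :
    Tendsto (fun k : ℕ => SumPow n (k - c) / (k : ℝ) ^ (n + 1)) atTop
      (nhds (1 / ((n : ℝ) + 1))) := by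
  have h1 : Tendsto (fun k : ℕ => SumPow n (k - c) / ((k - c : ℕ) : ℝ) ^ (n + 1)) atTop
      (nhds (1 / ((n : ℝ) + 1))) := (tendsto_sumPow n).comp (tendsto_sub_atTop_nat c)
  have h2 : Tendsto (fun k : ℕ => (((k - c : ℕ) : ℝ) / (k : ℝ)) ^ (n + 1)) atTop
      (nhds 1) := by
    have := (tendsto_kc_div_sub c).pow (n + 1)
    rwa [one_pow] at this
  have := h1.mul h2
  rw [mul_one] at this
  apply this.congr'
  filter_upwards [eventually_ge_atTop (c + 1)] with k hk
  have hk0 : (0:ℝ) < (k : ℝ) := by exact_mod_cast (by omega : 1 ≤ k)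
  have hkc0 : (0:ℝ) < ((k - c : ℕ) : ℝ) := by exact_mod_cast (by omega : 1 ≤ k - c)
  rw [div_pow]; field_simp

lemma sqrt_pow_two_mul {x : ℝ} (hx : 0 ≤ x) (n : ℕ) : Real.sqrt x ^ (2 * n) = x ^ n := by
  rw [pow_mul, Real.sq_sqrt hx]

lemma PS_diag_odd (k m : ℕ) (hodd : m % 2 = 1) (i : ℤ) : PS k m i i = 0 := by
  have h1 := PS_le k m i i
  rw [sub_self, Z_odd m 0 (by omega)] at h1
  have h2 := PS_nonneg k m i i
  simp only [Nat.cast_zero, zero_mul] at h1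
  linarith

lemma moment_odd (k m : ℕ) (hodd : m % 2 = 1) :
    (1 / (k : ℝ)) * ∑ i ∈ Finset.range k, PS k m ((i : ℕ) : ℤ) ((i : ℕ) : ℤ) = 0 := by
  rw [Finset.sum_eq_zero (fun i _ => PS_diag_odd k m hodd _), mul_zero]

lemma sum_shift_le (n c k : ℕ) :
    ∑ i ∈ Finset.range k, (((c + i : ℕ) : ℝ)) ^ n ≤ SumPow n (k + c) := by
  have hmap : ∑ i ∈ Finset.range k, (((c + i : ℕ) : ℝ)) ^ n
      = ∑ j ∈ (Finset.range k).map (addLeftEmbedding c), ((j : ℝ)) ^ n := by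
    rw [Finset.sum_map]
    rfl
  rw [hmap, SumPow]
  apply Finset.sum_le_sum_of_subset_of_nonneg
  · intro j hj
    simp only [Finset.mem_map, Finset.mem_range, addLeftEmbedding_apply] at hj
    obtain ⟨i, hi, rfl⟩ := hj
    simp only [Finset.mem_range]
    omega
  · intro j _ _
    positivity

/-- Even moments of diagonal path sums converge to `centralBinom n / (n+1)`. -/
lemma moment_even (n : ℕ) :
    Tendsto (fun k : ℕ => (1 / (k : ℝ)) * ∑ i ∈ Finset.range k,
        PS k (2 * n) ((i : ℕ) : ℤ) ((i : ℕ) : ℤ)) atTop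
      (nhds ((Nat.centralBinom n : ℝ) / ((n : ℝ) + 1))) := by
  set CB : ℝ := (Nat.centralBinom n : ℝ) with hCB
  have hCB0 : 0 ≤ CB := Nat.cast_nonneg _
  have hlow : Tendsto (fun k : ℕ => CB * (SumPow n (k - 4 * n) / (k : ℝ) ^ (n + 1)))
      atTop (nhds (CB / ((n : ℝ) + 1))) := by
    have := (tendsto_ratio_sub n (4 * n)).const_mul CB
    rwa [mul_one_div] at this
  have hup : Tendsto (fun k : ℕ => CB * (SumPow n (k + (2 * n + 1)) / (k : ℝ) ^ (n + 1)))
      atTop (nhds (CB / ((n : ℝ) + 1))) := by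
    have := (tendsto_ratio_add n (2 * n + 1)).const_mul CB
    rwa [mul_one_div] at this
  apply tendsto_of_tendsto_of_tendsto_of_le_of_le' hlow hup
  · -- lower bound
    filter_upwards [eventually_ge_atTop 1] with k hk
    have hk0 : (0:ℝ) < (k : ℝ) := by exact_mod_cast hk
    have hsum : CB * SumPow n (k - 4 * n) / (k : ℝ) ^ n
        ≤ ∑ i ∈ Finset.range k, PS k (2 * n) ((i : ℕ) : ℤ) ((i : ℕ) : ℤ) := by
      have hsub : ∑ i ∈ Finset.range k, PS k (2 * n) ((i : ℕ) : ℤ) ((i : ℕ) : ℤ)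
          ≥ ∑ j ∈ (Finset.range (k - 4 * n)).map (addLeftEmbedding (2 * n)),
              PS k (2 * n) ((j : ℕ) : ℤ) ((j : ℕ) : ℤ) := by
        apply Finset.sum_le_sum_of_subset_of_nonneg
        · intro j hj
          simp only [Finset.mem_map, Finset.mem_range, addLeftEmbedding_apply] at hj ⊢
          obtain ⟨i, hi, rfl⟩ := hj
          omega
        · intro j _ _
          exact PS_nonneg k _ _ _
      rw [Finset.sum_map] at hsub
      refine le_trans ?_ hsub
      have hterm : ∀ j ∈ Finset.range (k - 4 * n),
          CB * ((j : ℝ) / k) ^ n ≤ PS k (2 * n)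
            (((2 * n + j : ℕ)) : ℤ) (((2 * n + j : ℕ)) : ℤ) := by
        intro j hj
        rw [Finset.mem_range] at hj
        have h := PS_ge k (2 * n) (((2 * n + j : ℕ)) : ℤ) (((2 * n + j : ℕ)) : ℤ)
          (by push_cast; omega) (by push_cast; omega)
        rw [sub_self, Z_two_mul] at h
        have harg : ((((2 * n + j : ℕ) : ℤ) : ℝ) - ((2 * n : ℕ) : ℝ)) = (j : ℝ) := by
          push_cast; ring
        rw [harg] at h
        rw [sqrt_pow_two_mul (by positivity) n] at h
        exact_mod_cast h
      calc CB * SumPow n (k - 4 * n) / (k : ℝ) ^ n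
          = ∑ j ∈ Finset.range (k - 4 * n), CB * ((j : ℝ) / k) ^ n := by
            rw [SumPow, Finset.mul_sum, Finset.sum_div]
            apply Finset.sum_congr rfl
            intro j _
            rw [div_pow]
            ring
        _ ≤ ∑ j ∈ Finset.range (k - 4 * n), PS k (2 * n)
              (((2 * n + j : ℕ)) : ℤ) (((2 * n + j : ℕ)) : ℤ) := Finset.sum_le_sum hterm
        _ = ∑ i ∈ Finset.range (k - 4 * n),
              PS k (2 * n) ((((addLeftEmbedding (2 * n)) i : ℕ)) : ℤ)
                ((((addLeftEmbedding (2 * n)) i : ℕ)) : ℤ) := by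
            apply Finset.sum_congr rfl
            intro i _
            rfl
    calc CB * (SumPow n (k - 4 * n) / (k : ℝ) ^ (n + 1))
        = (1 / (k : ℝ)) * (CB * SumPow n (k - 4 * n) / (k : ℝ) ^ n) := by
          rw [pow_succ]
          ring
      _ ≤ (1 / (k : ℝ)) * ∑ i ∈ Finset.range k, PS k (2 * n) ((i : ℕ) : ℤ) ((i : ℕ) : ℤ) := by
          apply mul_le_mul_of_nonneg_left hsum (by positivity)
  · -- upper bound
    filter_upwards [eventually_ge_atTop 1] with k hk
    have hk0 : (0:ℝ) < (k : ℝ) := by exact_mod_cast hk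
    have hsum : ∑ i ∈ Finset.range k, PS k (2 * n) ((i : ℕ) : ℤ) ((i : ℕ) : ℤ)
        ≤ CB * SumPow n (k + (2 * n + 1)) / (k : ℝ) ^ n := by
      have hterm : ∀ i ∈ Finset.range k,
          PS k (2 * n) ((i : ℕ) : ℤ) ((i : ℕ) : ℤ)
            ≤ CB * ((((2 * n + 1 + i : ℕ)) : ℝ) / k) ^ n := by
        intro i _
        have h := PS_le k (2 * n) ((i : ℕ) : ℤ) ((i : ℕ) : ℤ)
        rw [sub_self, Z_two_mul] at h
        have harg : ((((i : ℕ) : ℤ) : ℝ) + ((2 * n : ℕ) : ℝ) + 1)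
            = (((2 * n + 1 + i : ℕ)) : ℝ) := by push_cast; ring
        rw [harg] at h
        rw [sqrt_pow_two_mul (by positivity) n] at h
        exact_mod_cast h
      calc ∑ i ∈ Finset.range k, PS k (2 * n) ((i : ℕ) : ℤ) ((i : ℕ) : ℤ)
          ≤ ∑ i ∈ Finset.range k, CB * ((((2 * n + 1 + i : ℕ)) : ℝ) / k) ^ n :=
            Finset.sum_le_sum hterm
        _ = CB * (∑ i ∈ Finset.range k, (((2 * n + 1 + i : ℕ)) : ℝ) ^ n) / (k : ℝ) ^ n := by
            rw [Finset.mul_sum, Finset.sum_div]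
            apply Finset.sum_congr rfl
            intro i _
            rw [div_pow]
            ring
        _ ≤ CB * SumPow n (k + (2 * n + 1)) / (k : ℝ) ^ n := by
            apply div_le_div_of_nonneg_right ?_ (by positivity)
            exact mul_le_mul_of_nonneg_left (sum_shift_le n (2 * n + 1) k) hCB0
    calc (1 / (k : ℝ)) * ∑ i ∈ Finset.range k, PS k (2 * n) ((i : ℕ) : ℤ) ((i : ℕ) : ℤ)
        ≤ (1 / (k : ℝ)) * (CB * SumPow n (k + (2 * n + 1)) / (k : ℝ) ^ n) := by
          apply mul_le_mul_of_nonneg_left hsum (by positivity)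
      _ = CB * (SumPow n (k + (2 * n + 1)) / (k : ℝ) ^ (n + 1)) := by
          rw [pow_succ]
          ring

def Sint (n : ℕ) : ℝ := ∫ x in (-(π/2))..(π/2), sin x ^ (2 * n)

lemma Sint_eq (n : ℕ) : Sint n = π * ((Nat.centralBinom n : ℝ) / 4 ^ n) := by
  induction n with
  | zero => simp [Sint, Nat.centralBinom]
  | succ n ih =>
    have h : Sint (n + 1) = ((2 * (n : ℝ) + 1) / (2 * n + 2)) * Sint n := by
      unfold Sint
      have h2 : 2 * (n + 1) = 2 * n + 2 := by ring
      rw [h2, integral_sin_pow (2 * n)]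
      rw [Real.cos_pi_div_two, Real.sin_neg, Real.cos_neg, Real.cos_pi_div_two]
      push_cast
      ring
    rw [h, ih]
    have h2' : ((n : ℝ) + 1) * (Nat.centralBinom (n + 1) : ℝ)
        = 2 * (2 * (n : ℝ) + 1) * (Nat.centralBinom n : ℝ) := by
      exact_mod_cast Nat.succ_mul_centralBinom_succ n
    have hn1 : ((n : ℝ) + 1) ≠ 0 := by positivity
    have h4 : (4 : ℝ) ^ (n + 1) = 4 * 4 ^ n := by ring
    rw [h4]
    field_simp
    linear_combination (-2 : ℝ) * h2'

lemma integral_even_moment (n : ℕ) :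
    ∫ x in (-2 : ℝ)..2, x ^ (2 * n) * Real.sqrt (4 - x ^ 2)
      = 4 ^ (n + 1) * (Sint n - Sint (n + 1)) := by
  have hg : Continuous fun x : ℝ => x ^ (2 * n) * Real.sqrt (4 - x ^ 2) := by
    apply Continuous.mul (continuous_pow _)
    exact (continuous_const.sub (continuous_pow 2)).sqrt
  have hsub : ∫ x in (-2 : ℝ)..2, x ^ (2 * n) * Real.sqrt (4 - x ^ 2)
      = ∫ θ in (-(π/2))..(π/2), (2 * Real.cos θ) •
          ((fun x : ℝ => x ^ (2 * n) * Real.sqrt (4 - x ^ 2)) ∘ (fun θ => 2 * Real.sin θ)) θ := by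
    rw [integral_comp_smul_deriv (f := fun θ : ℝ => 2 * Real.sin θ)
      (f' := fun θ : ℝ => 2 * Real.cos θ) (fun x _ => (Real.hasDerivAt_sin x).const_mul 2)
      (by fun_prop) hg]
    norm_num
  rw [hsub]
  have hcongr : ∀ θ ∈ Set.uIcc (-(π/2)) (π/2),
      (2 * Real.cos θ) • ((fun x : ℝ => x ^ (2 * n) * Real.sqrt (4 - x ^ 2))
          ∘ (fun θ => 2 * Real.sin θ)) θ
        = 4 ^ (n + 1) * (Real.sin θ ^ (2 * n) - Real.sin θ ^ (2 * (n + 1))) := by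
    intro θ hθ
    have hmem : θ ∈ Set.Icc (-(π/2)) (π/2) := by
      rwa [Set.uIcc_of_le (by linarith [Real.pi_pos])] at hθ
    have hcos : 0 ≤ Real.cos θ := Real.cos_nonneg_of_mem_Icc hmem
    have hsqrt : Real.sqrt (4 - (2 * Real.sin θ) ^ 2) = 2 * Real.cos θ := by
      have h1 : 4 - (2 * Real.sin θ) ^ 2 = (2 * Real.cos θ) ^ 2 := by
        linear_combination (-4 : ℝ) * Real.sin_sq_add_cos_sq θ
      have hs := Real.sqrt_sq (show (0:ℝ) ≤ 2 * Real.cos θ by linarith)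
      rw [h1, hs]
    simp only [Function.comp_apply, smul_eq_mul]
    rw [hsqrt]
    have hsin2 : Real.sin θ ^ (2 * (n + 1)) = Real.sin θ ^ (2 * n) * Real.sin θ ^ 2 := by
      rw [← pow_add]
      congr 1
    have hcossq : Real.cos θ ^ 2 = 1 - Real.sin θ ^ 2 := by
      have := Real.sin_sq_add_cos_sq θ; linarith
    rw [hsin2]
    have h4 : (4 : ℝ) ^ (n + 1) = 4 ^ n * 4 := by ring
    have h2pow : (2 * Real.sin θ) ^ (2 * n) = 4 ^ n * Real.sin θ ^ (2 * n) := by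
      rw [mul_pow]
      congr 1
      rw [pow_mul]
      norm_num
    rw [h2pow]
    linear_combination (4 ^ n * 4 * Real.sin θ ^ (2 * n)) * hcossq
  rw [integral_congr hcongr]
  have hint1 : IntervalIntegrable (fun θ => Real.sin θ ^ (2 * n)) volume (-(π/2)) (π/2) :=
    (continuous_sin.pow _).intervalIntegrable _ _
  have hint2 : IntervalIntegrable (fun θ => Real.sin θ ^ (2 * (n + 1))) volume (-(π/2)) (π/2) :=
    (continuous_sin.pow _).intervalIntegrable _ _
  rw [intervalIntegral.integral_const_mul, integral_sub hint1 hint2]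
  rfl

lemma integral_odd_moment (m : ℕ) (hm : m % 2 = 1) :
    ∫ x in (-2 : ℝ)..2, x ^ m * Real.sqrt (4 - x ^ 2) = 0 := by
  set f : ℝ → ℝ := fun x => x ^ m * Real.sqrt (4 - x ^ 2) with hf
  have hodd : ∀ x, f (-x) = -f x := by
    intro x
    simp only [hf]
    rw [Odd.neg_pow (Nat.odd_iff.2 hm), neg_sq]
    ring
  have h1 : ∫ x in (-2 : ℝ)..2, f (-x) = ∫ x in (-2 : ℝ)..2, f x := by
    rw [integral_comp_neg]
    norm_num
  have h2 : ∫ x in (-2 : ℝ)..2, f (-x) = -∫ x in (-2 : ℝ)..2, f x := by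
    rw [show (fun x => f (-x)) = fun x => -f x from funext hodd]
    exact integral_neg
  linarith [h1, h2]

/-- The limit moments. -/
def momentLimit (m : ℕ) : ℝ :=
  if m % 2 = 0 then (Nat.centralBinom (m / 2) : ℝ) / (((m / 2 : ℕ) : ℝ) + 1) else 0

lemma integral_moment (m : ℕ) :
    (1 / (2 * π)) * ∫ x in (-2 : ℝ)..2, x ^ m * Real.sqrt (4 - x ^ 2) = momentLimit m := by
  rcases Nat.even_or_odd m with he | ho
  · obtain ⟨n, hn⟩ := he
    have hm : m = 2 * n := by omega
    subst hm
    rw [integral_even_moment n, momentLimit, if_pos (by omega), Sint_eq, Sint_eq]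
    have : (2 * n) / 2 = n := by omega
    rw [this]
    have h2' : ((n : ℝ) + 1) * (Nat.centralBinom (n + 1) : ℝ)
        = 2 * (2 * (n : ℝ) + 1) * (Nat.centralBinom n : ℝ) := by
      exact_mod_cast Nat.succ_mul_centralBinom_succ n
    have hn1 : ((n : ℝ) + 1) ≠ 0 := by positivity
    have hπ : π ≠ 0 := Real.pi_ne_zero
    have h4n : (4 : ℝ) ^ n ≠ 0 := by positivity
    have hstep : (Nat.centralBinom (n + 1) : ℝ)
        = 2 * (2 * (n : ℝ) + 1) * (Nat.centralBinom n : ℝ) / ((n : ℝ) + 1) := by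
      field_simp
      linarith [h2']
    rw [hstep]
    have h4 : (4 : ℝ) ^ (n + 1) = 4 * 4 ^ n := by ring
    rw [h4]
    field_simp
    ring
  · have hm1 : m % 2 = 1 := Nat.odd_iff.1 ho
    rw [integral_odd_moment m hm1, momentLimit, if_neg (by omega), mul_zero]


/-- The scaled eigenvalues. -/
def ζk (k : ℕ) (j : Fin k) : ℝ := ev k j / Real.sqrt ((k : ℝ) / 2)

lemma zeta_mem (k : ℕ) (hk : 1 ≤ k) (j : Fin k) : ζk k j ∈ Set.Icc (-2 : ℝ) 2 := by
  have hk0 : (0:ℝ) < (k : ℝ) := by exact_mod_cast hk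
  have hs : (0:ℝ) < Real.sqrt ((k : ℝ) / 2) := Real.sqrt_pos.2 (by linarith)
  have h1 : |ζk k j| ≤ 2 := by
    rw [ζk, abs_div, abs_of_pos hs, div_le_iff₀ hs]
    refine (ev_bound k j).trans ?_
    have : Real.sqrt (((k : ℝ) - 1) / 2) ≤ Real.sqrt ((k : ℝ) / 2) :=
      Real.sqrt_le_sqrt (by linarith)
    linarith
  constructor <;> [linarith [abs_le.1 h1 |>.1]; linarith [abs_le.1 h1 |>.2]]

lemma moment_tendsto (m : ℕ) :
    Tendsto (fun k : ℕ => (1 / (k : ℝ)) * ∑ j : Fin k, (ζk k j) ^ m) atTop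
      (nhds (momentLimit m)) := by
  have hfin : ∀ k : ℕ, 1 ≤ k → (1 / (k : ℝ)) * ∑ j : Fin k, (ζk k j) ^ m
      = (1 / (k : ℝ)) * ∑ i ∈ Finset.range k, PS k m ((i : ℕ) : ℤ) ((i : ℕ) : ℤ) := by
    intro k hk
    rw [show (∑ j : Fin k, (ζk k j) ^ m) = ∑ i : Fin k, PS k m ((i : ℕ) : ℤ) ((i : ℕ) : ℤ)
      from sum_pow_eq k hk m]
    congr 1
    exact Fin.sum_univ_eq_sum_range (fun i => PS k m ((i : ℕ) : ℤ) ((i : ℕ) : ℤ)) k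
  rcases Nat.even_or_odd m with he | ho
  · obtain ⟨n, hn⟩ := he
    have hm : m = 2 * n := by omega
    subst hm
    have hml : momentLimit (2 * n) = (Nat.centralBinom n : ℝ) / ((n : ℝ) + 1) := by
      rw [momentLimit, if_pos (by omega)]
      congr 2 <;> · congr 1; omega
    rw [hml]
    apply (moment_even n).congr'
    filter_upwards [eventually_ge_atTop 1] with k hk
    exact (hfin k hk).symm
  · have hm1 : m % 2 = 1 := Nat.odd_iff.1 ho
    have hml : momentLimit m = 0 := by rw [momentLimit, if_neg (by omega)]
    rw [hml]
    apply (tendsto_const_nhds (x := (0:ℝ))).congr'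
    filter_upwards [eventually_ge_atTop 1] with k hk
    rw [hfin k hk, moment_odd k m hm1]

lemma sqrt4_cont : Continuous fun x : ℝ => Real.sqrt (4 - x ^ 2) :=
  (continuous_const.sub (continuous_pow 2)).sqrt

lemma poly_tendsto (p : Polynomial ℝ) :
    Tendsto (fun k : ℕ => (1 / (k : ℝ)) * ∑ j : Fin k, p.eval (ζk k j)) atTop
      (nhds ((1 / (2 * π)) * ∫ x in (-2 : ℝ)..2, p.eval x * Real.sqrt (4 - x ^ 2))) := by
  set d := p.natDegree + 1 with hd
  have hL : (1 / (2 * π)) * ∫ x in (-2 : ℝ)..2, p.eval x * Real.sqrt (4 - x ^ 2)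
      = ∑ m ∈ Finset.range d, p.coeff m * momentLimit m := by
    have hint : ∀ x : ℝ, p.eval x * Real.sqrt (4 - x ^ 2)
        = ∑ m ∈ Finset.range d, p.coeff m * (x ^ m * Real.sqrt (4 - x ^ 2)) := by
      intro x
      rw [Polynomial.eval_eq_sum_range, Finset.sum_mul]
      apply Finset.sum_congr rfl
      intro m _
      ring
    rw [show (fun x : ℝ => p.eval x * Real.sqrt (4 - x ^ 2))
        = fun x : ℝ => ∑ m ∈ Finset.range d, p.coeff m * (x ^ m * Real.sqrt (4 - x ^ 2))
      from funext hint]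
    rw [intervalIntegral.integral_finset_sum]
    · rw [Finset.mul_sum]
      apply Finset.sum_congr rfl
      intro m _
      rw [intervalIntegral.integral_const_mul, ← integral_moment m]
      ring
    · intro m _
      apply Continuous.intervalIntegrable
      exact continuous_const.mul ((continuous_pow m).mul sqrt4_cont)
  rw [hL]
  have hFk : ∀ k : ℕ, (1 / (k : ℝ)) * ∑ j : Fin k, p.eval (ζk k j)
      = ∑ m ∈ Finset.range d, p.coeff m * ((1 / (k : ℝ)) * ∑ j : Fin k, (ζk k j) ^ m) := by
    intro k
    have : ∀ j : Fin k, p.eval (ζk k j) = ∑ m ∈ Finset.range d, p.coeff m * (ζk k j) ^ m := by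
      intro j
      rw [Polynomial.eval_eq_sum_range]
    rw [Finset.sum_congr rfl (fun j _ => this j), Finset.sum_comm, Finset.mul_sum]
    apply Finset.sum_congr rfl
    intro m _
    rw [← Finset.mul_sum, Finset.mul_sum]
    rw [← Finset.mul_sum]
    ring
  rw [show (fun k : ℕ => (1 / (k : ℝ)) * ∑ j : Fin k, p.eval (ζk k j))
      = fun k : ℕ => ∑ m ∈ Finset.range d, p.coeff m
          * ((1 / (k : ℝ)) * ∑ j : Fin k, (ζk k j) ^ m) from funext hFk]
  exact tendsto_finset_sum _ (fun m _ => (moment_tendsto m).const_mul _)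


theorem main (φ : ℝ → ℝ) (hφc : Continuous φ) :
    Tendsto (fun k : ℕ => (1 / (k : ℝ)) * ∑ j : Fin k, φ (ζk k j)) atTop
      (nhds ((1 / (2 * π)) * ∫ x in (-2 : ℝ)..2, φ x * Real.sqrt (4 - x ^ 2))) := by
  rw [Metric.tendsto_atTop]
  intro ε hε
  obtain ⟨p, hp⟩ := exists_polynomial_near_of_continuousOn (-2) 2 φ
    hφc.continuousOn (ε / 8) (by positivity)
  have hpoly := poly_tendsto p
  rw [Metric.tendsto_atTop] at hpoly
  obtain ⟨N₁, hN₁⟩ := hpoly (ε / 8) (by positivity)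
  refine ⟨max N₁ 1, fun k hk => ?_⟩
  have hk1 : 1 ≤ k := le_trans (le_max_right _ _) hk
  have hkN : N₁ ≤ k := le_trans (le_max_left _ _) hk
  have hk0 : (0:ℝ) < (k : ℝ) := by exact_mod_cast hk1
  set F : ℝ := (1 / (k : ℝ)) * ∑ j : Fin k, φ (ζk k j) with hF
  set Fp : ℝ := (1 / (k : ℝ)) * ∑ j : Fin k, p.eval (ζk k j) with hFp
  set L : ℝ := (1 / (2 * π)) * ∫ x in (-2 : ℝ)..2, φ x * Real.sqrt (4 - x ^ 2) with hL
  set Lp : ℝ := (1 / (2 * π)) * ∫ x in (-2 : ℝ)..2, p.eval x * Real.sqrt (4 - x ^ 2) with hLp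
  have hsqrt_le : ∀ x : ℝ, Real.sqrt (4 - x ^ 2) ≤ 2 := by
    intro x
    have h4 : Real.sqrt 4 = 2 := by
      rw [show (4:ℝ) = 2 ^ 2 by norm_num, Real.sqrt_sq (by norm_num)]
    calc Real.sqrt (4 - x ^ 2) ≤ Real.sqrt 4 := Real.sqrt_le_sqrt (by nlinarith [sq_nonneg x])
      _ = 2 := h4
  -- step 1 : |F - Fp| ≤ ε/8
  have h1 : |F - Fp| ≤ ε / 8 := by
    rw [hF, hFp, ← mul_sub, ← Finset.sum_sub_distrib, abs_mul,
      abs_of_pos (by positivity : (0:ℝ) < 1 / (k : ℝ))]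
    have hbound : |∑ j : Fin k, (φ (ζk k j) - p.eval (ζk k j))| ≤ (k : ℝ) * (ε / 8) := by
      refine (Finset.abs_sum_le_sum_abs _ _).trans ?_
      have : ∀ j : Fin k, |φ (ζk k j) - p.eval (ζk k j)| ≤ ε / 8 := by
        intro j
        have := hp (ζk k j) (zeta_mem k hk1 j)
        rw [abs_sub_comm]
        linarith
      calc ∑ j : Fin k, |φ (ζk k j) - p.eval (ζk k j)| ≤ ∑ _j : Fin k, (ε / 8) :=
            Finset.sum_le_sum (fun j _ => this j)
        _ = (k : ℝ) * (ε / 8) := by rw [Finset.sum_const, Finset.card_univ]; simp [mul_comm]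
    calc (1 / (k : ℝ)) * |∑ j : Fin k, (φ (ζk k j) - p.eval (ζk k j))|
        ≤ (1 / (k : ℝ)) * ((k : ℝ) * (ε / 8)) := by
          apply mul_le_mul_of_nonneg_left hbound (by positivity)
      _ = ε / 8 := by field_simp
  -- step 2 : |Lp - L| ≤ ε/6
  have h2 : |Lp - L| ≤ ε / 6 := by
    have hint1 : IntervalIntegrable (fun x => p.eval x * Real.sqrt (4 - x ^ 2))
        volume (-2 : ℝ) 2 := (p.continuous_aeval.mul sqrt4_cont).intervalIntegrable _ _
    have hint2 : IntervalIntegrable (fun x => φ x * Real.sqrt (4 - x ^ 2))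
        volume (-2 : ℝ) 2 := (hφc.mul sqrt4_cont).intervalIntegrable _ _
    have hdiff : Lp - L = (1 / (2 * π)) * ∫ x in (-2 : ℝ)..2,
        (p.eval x - φ x) * Real.sqrt (4 - x ^ 2) := by
      rw [hLp, hL, ← mul_sub, ← intervalIntegral.integral_sub hint1 hint2]
      congr 1
      apply intervalIntegral.integral_congr
      intro x _
      ring
    have hnorm : ‖∫ x in (-2 : ℝ)..2, (p.eval x - φ x) * Real.sqrt (4 - x ^ 2)‖
        ≤ (ε / 8 * 2) * |(2 : ℝ) - (-2)| := by
      apply intervalIntegral.norm_integral_le_of_norm_le_const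
      intro x hx
      have hxm : x ∈ Set.Icc (-2 : ℝ) 2 := by
        rw [Set.uIoc_of_le (by norm_num : (-2:ℝ) ≤ 2)] at hx
        exact ⟨hx.1.le, hx.2⟩
      rw [Real.norm_eq_abs, abs_mul, abs_of_nonneg (Real.sqrt_nonneg _)]
      have ha := hp x hxm
      have hb := hsqrt_le x
      have hs0 := Real.sqrt_nonneg (4 - x ^ 2)
      apply mul_le_mul ha.le hb hs0 (by positivity)
    have hπ : (6 : ℝ) ≤ 2 * π := by nlinarith [Real.pi_gt_three]
    rw [hdiff, abs_mul, abs_of_pos (by positivity : (0:ℝ) < 1 / (2 * π))]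
    have : |(2 : ℝ) - (-2)| = 4 := by norm_num
    rw [this] at hnorm
    rw [Real.norm_eq_abs] at hnorm
    calc (1 / (2 * π)) * |∫ x in (-2 : ℝ)..2, (p.eval x - φ x) * Real.sqrt (4 - x ^ 2)|
        ≤ (1 / 6) * (ε / 8 * 2 * 4) := by
          apply mul_le_mul ?_ hnorm (abs_nonneg _) (by norm_num)
          rw [div_le_div_iff₀ (by positivity) (by norm_num)]
          linarith
      _ = ε / 6 := by ring
  have h3 : dist Fp Lp < ε / 8 := hN₁ k hkN
  rw [Real.dist_eq] at h3 ⊢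
  calc |F - L| ≤ |F - Fp| + |Fp - Lp| + |Lp - L| := by
        have t1 := abs_sub_le F Fp L
        have t2 := abs_sub_le Fp Lp L
        linarith
    _ < ε / 8 + ε / 8 + ε / 6 := by
        apply add_lt_add_of_lt_of_le (add_lt_add_of_le_of_lt h1 h3) h2
    _ < ε := by linarith

end SemicircleAux

/-- the contracted zeros of Hermite polynomials (eigenvalues of the Jacobi matrix
with zero diagonal and off-diagonal entries `√(j/2)`) follow the Wigner semicircle law. -/
theorem hermite_zeros_semicircle (φ : ℝ → ℝ) (hφc : Continuous φ)
    (hφb : ∃ C : ℝ, ∀ x, |φ x| ≤ C) :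
    Filter.Tendsto
      (fun k : ℕ =>
        (1 / (k : ℝ)) * ∑ j : Fin k,
          φ (((jacobiMatrix_isHermitian k (fun _ => 0)
                (fun i => Real.sqrt (((i : ℝ) + 1) / 2))).eigenvalues j) /
              Real.sqrt ((k : ℝ) / 2)))
      Filter.atTop
      (nhds ((1 / (2 * Real.pi)) * ∫ x in (-2 : ℝ)..2, φ x * Real.sqrt (4 - x ^ 2))) := by
  exact SemicircleAux.main φ hφc
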